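/- arXiv:2312.15394 — 2 statements merged into one kernel-verified Lean document; each statement's English description precedes it below -/
import Mathlib

section
/- Let A, B be n×n complex positive definite matrices. For every t ∈ (0, 1), the spectral geometric mean and the Wasserstein mean satisfy A ♮_t B ⪯ A ◇_t B in the near order; moreover, equality A ♮_t B = A ◇_t B for some t ∈ (0,1) holds if and only if A = B. -/
open scoped ComplexOrder Matrix

noncomputable section

/-- Real power of a (positive definite) matrix via the continuous functional calculus. -/
def mpow {n : ℕ} (A : Matrix (Fin n) (Fin n) ℂ) (t : ℝ) : Matrix (Fin n) (Fin n) ℂ :=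
  cfc (fun x : ℝ => x ^ t) A

/-- The matrix logarithm of a (positive definite) matrix via the continuous functional calculus. -/
def mlog {n : ℕ} (A : Matrix (Fin n) (Fin n) ℂ) : Matrix (Fin n) (Fin n) ℂ :=
  cfc Real.log A

/-- The metric geometric mean `A ♯ₜ B = A^{1/2} (A^{-1/2} B A^{-1/2})^t A^{1/2}`.
`A ♯ B` is `gmean A B (1/2)`. -/
def gmean {n : ℕ} (A B : Matrix (Fin n) (Fin n) ℂ) (t : ℝ) : Matrix (Fin n) (Fin n) ℂ :=
  mpow A (1/2) * mpow (mpow A (-(1/2)) * B * mpow A (-(1/2))) t * mpow A (1/2)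

/-- The Loewner order: `A ≤ B` iff `B - A` is positive semidefinite. -/
def LoewnerLE {n : ℕ} (A B : Matrix (Fin n) (Fin n) ℂ) : Prop :=
  (B - A).PosSemidef

/-- The near order: `A ⪯ B` iff `I ≤ A⁻¹ ♯ B` in the Loewner order. -/
def NearLE {n : ℕ} (A B : Matrix (Fin n) (Fin n) ℂ) : Prop :=
  LoewnerLE 1 (gmean A⁻¹ B (1/2))

/-- The spectral geometric mean `A ♮ₜ B = (A⁻¹ ♯ B)^t A (A⁻¹ ♯ B)^t`. -/
def smean {n : ℕ} (A B : Matrix (Fin n) (Fin n) ℂ) (t : ℝ) : Matrix (Fin n) (Fin n) ℂ :=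
  mpow (gmean A⁻¹ B (1/2)) t * A * mpow (gmean A⁻¹ B (1/2)) t

/-- The Wasserstein mean `A ◇ₜ B = [(1-t)I + t(A⁻¹ ♯ B)] A [(1-t)I + t(A⁻¹ ♯ B)]`. -/
def wmean {n : ℕ} (A B : Matrix (Fin n) (Fin n) ℂ) (t : ℝ) : Matrix (Fin n) (Fin n) ℂ :=
  (((1 - t : ℝ) : ℂ) • (1 : Matrix (Fin n) (Fin n) ℂ) + ((t : ℝ) : ℂ) • gmean A⁻¹ B (1/2)) * A *
    (((1 - t : ℝ) : ℂ) • (1 : Matrix (Fin n) (Fin n) ℂ) + ((t : ℝ) : ℂ) • gmean A⁻¹ B (1/2))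

/-- The arithmetic mean `A ∇ₜ B = (1-t)A + tB`. -/
def amean {n : ℕ} (A B : Matrix (Fin n) (Fin n) ℂ) (t : ℝ) : Matrix (Fin n) (Fin n) ℂ :=
  ((1 - t : ℝ) : ℂ) • A + ((t : ℝ) : ℂ) • B

/-- The matrix absolute value `|X| = (XᴴX)^{1/2}`. -/
def matAbs {n : ℕ} (X : Matrix (Fin n) (Fin n) ℂ) : Matrix (Fin n) (Fin n) ℂ :=
  mpow (Xᴴ * X) (1/2)

/-- The eigenvalues of a Hermitian matrix listed in nonincreasing order:
`eigDesc hA i` is `λ_{i+1}(A)`, so `eigDesc hA 0 = λ₁(A) ≥ eigDesc hA 1 = λ₂(A) ≥ ⋯`. -/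
def eigDesc {n : ℕ} {A : Matrix (Fin n) (Fin n) ℂ} (hA : A.IsHermitian) : Fin n → ℝ :=
  fun i => (hA.eigenvalues ∘ Tuple.sort hA.eigenvalues) i.rev

namespace SmeanAux

variable {n : ℕ}

local notation "Mat" => Matrix (Fin n) (Fin n) ℂ

lemma contOn (f : ℝ → ℝ) (A : Mat) : ContinuousOn f (spectrum ℝ A) :=
  (Matrix.finite_real_spectrum (A := A)).continuousOn f

lemma spec_pos {A : Mat} (hA : A.PosDef) : ∀ x ∈ spectrum ℝ A, 0 < x := by
  rw [hA.isHermitian.spectrum_real_eq_range_eigenvalues]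
  rintro x ⟨i, rfl⟩
  exact hA.eigenvalues_pos i

lemma posDef_conj {M : Mat} (hM : M.PosDef) {B : Mat} (hB : IsUnit B) :
    (Bᴴ * M * B).PosDef := by
  exact hM.conjTranspose_mul_mul_same ((Matrix.mulVec_injective_iff_isUnit (K := ℂ)).mpr hB)

lemma posDef_conj' {M : Mat} (hM : M.PosDef) {P : Mat} (hP : P.PosDef) :
    (P * M * P).PosDef := by
  have := posDef_conj hM (B := P) hP.isUnit
  rwa [hP.isHermitian.eq] at this

lemma cfc_posDef {A : Mat} (hA : A.PosDef) {f : ℝ → ℝ}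
    (hf : ∀ x ∈ spectrum ℝ A, 0 < f x) : (cfc f A).PosDef := by
  rw [hA.isHermitian.cfc_eq, Matrix.IsHermitian.cfc]
  have hD : (Matrix.diagonal (RCLike.ofReal ∘ f ∘ hA.isHermitian.eigenvalues) : Mat).PosDef := by
    rw [Matrix.posDef_diagonal_iff]
    intro i
    have := hf _ (hA.isHermitian.eigenvalues_mem_spectrum_real i)
    simp only [Function.comp_apply]
    exact RCLike.ofReal_pos.mpr this
  have hU : IsUnit (hA.isHermitian.eigenvectorUnitary : Mat) := ⟨Unitary.toUnits hA.isHermitian.eigenvectorUnitary, rfl⟩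
  have := posDef_conj hD (B := star (hA.isHermitian.eigenvectorUnitary : Mat)) hU.star
  simpa only [Unitary.conjStarAlgAut_apply, ← Matrix.star_eq_conjTranspose, star_star] using this

lemma cfc_posSemidef {A : Mat} (hA : A.PosDef) {f : ℝ → ℝ}
    (hf : ∀ x ∈ spectrum ℝ A, 0 ≤ f x) : (cfc f A).PosSemidef := by
  rw [hA.isHermitian.cfc_eq, Matrix.IsHermitian.cfc]
  have hD : (Matrix.diagonal (RCLike.ofReal ∘ f ∘ hA.isHermitian.eigenvalues) : Mat).PosSemidef := by
    rw [Matrix.posSemidef_diagonal_iff]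
    intro i
    have := hf _ (hA.isHermitian.eigenvalues_mem_spectrum_real i)
    simp only [Function.comp_apply]
    exact RCLike.ofReal_nonneg.mpr this
  have := hD.mul_mul_conjTranspose_same (hA.isHermitian.eigenvectorUnitary : Mat)
  simpa only [Unitary.conjStarAlgAut_apply, ← Matrix.star_eq_conjTranspose] using this


lemma mpow_posDef {A : Mat} (hA : A.PosDef) (t : ℝ) : (mpow A t).PosDef :=
  cfc_posDef hA fun x hx => Real.rpow_pos_of_pos (spec_pos hA x hx) t

lemma mpow_add {A : Mat} (hA : A.PosDef) (s t : ℝ) :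
    mpow A s * mpow A t = mpow A (s + t) := by
  unfold mpow
  rw [← cfc_mul _ _ A (contOn _ A) (contOn _ A)]
  exact cfc_congr fun x hx => (Real.rpow_add (spec_pos hA x hx) s t).symm

lemma mpow_zero {A : Mat} (hA : A.PosDef) : mpow A 0 = 1 := by
  unfold mpow
  have h1 : cfc (fun x : ℝ => x ^ (0:ℝ)) A = cfc (fun _ : ℝ => (1:ℝ)) A :=
    cfc_congr fun x _ => Real.rpow_zero x
  rw [h1, cfc_const_one ℝ A hA.isHermitian.isSelfAdjoint]

lemma mpow_one {A : Mat} (hA : A.PosDef) : mpow A 1 = A := by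
  unfold mpow
  have h1 : cfc (fun x : ℝ => x ^ (1:ℝ)) A = cfc (fun x : ℝ => x) A :=
    cfc_congr fun x _ => Real.rpow_one x
  rw [h1, cfc_id' ℝ A hA.isHermitian.isSelfAdjoint]

lemma mpow_neg_one {A : Mat} (hA : A.PosDef) : mpow A (-1) = A⁻¹ := by
  refine (Matrix.inv_eq_left_inv ?_).symm
  have := mpow_add hA (-1) 1
  rw [mpow_one hA] at this
  rw [this]
  norm_num
  exact mpow_zero hA

lemma sqrt_unique {M W : Mat} (hM : M.PosDef) (hW : W.PosDef) (h : W * W = M) :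
    W = mpow M (1/2) := by
  open scoped MatrixOrder in
  apply (CFC.sq_eq_sq_iff W (mpow M (1/2)) hW.posSemidef.nonneg (mpow_posDef hM (1/2)).posSemidef.nonneg).mp
  rw [pow_two, pow_two, h, mpow_add hM]
  norm_num
  exact (mpow_one hM).symm

lemma bern_lt {x t : ℝ} (hx : 0 < x) (hx1 : x ≠ 1) (ht : 0 < t) (ht1 : t < 1) :
    x ^ t < 1 - t + t * x := by
  set y := x ^ t with hy_def
  have hy : 0 < y := Real.rpow_pos_of_pos hx t
  have hyx : y ^ t⁻¹ = x := by
    rw [hy_def, Real.rpow_rpow_inv hx.le ht.ne']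
  have hy1 : y ≠ 1 := by
    intro h
    apply hx1
    rw [← hyx, h, Real.one_rpow]
  have hp : 1 < t⁻¹ := (one_lt_inv₀ ht).mpr ht1
  have key := one_add_mul_self_lt_rpow_one_add (s := y - 1) (by linarith) (by
    intro h; exact hy1 (by linarith)) hp
  rw [show (1 : ℝ) + (y - 1) = y by ring, hyx] at key
  have h2 := mul_lt_mul_of_pos_left key ht
  have h3 : t * (1 + t⁻¹ * (y - 1)) = t + (y - 1) := by
    field_simp
  rw [h3] at h2
  linarith

lemma bern_le {x t : ℝ} (hx : 0 < x) (ht : 0 < t) (ht1 : t < 1) :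
    x ^ t ≤ 1 - t + t * x := by
  by_cases hx1 : x = 1
  · subst hx1; simp [Real.one_rpow]
  · exact (bern_lt hx hx1 ht ht1).le


lemma real_smul (r : ℝ) (X : Mat) : r • X = ((r : ℂ)) • X := by
  ext i j
  simp [Matrix.smul_apply, Complex.real_smul]

lemma mpow_one_matrix (t : ℝ) : mpow (1 : Mat) t = 1 := by
  unfold mpow
  rw [cfc_apply_one]
  simp [Real.one_rpow]

section Gmean

lemma inner_posDef {X Y : Mat} (hX : X.PosDef) (hY : Y.PosDef) :
    (mpow X (-(1/2)) * Y * mpow X (-(1/2))).PosDef :=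
  posDef_conj' hY (mpow_posDef hX _)

lemma gmean_posDef {X Y : Mat} (hX : X.PosDef) (hY : Y.PosDef) : (gmean X Y (1/2)).PosDef :=
  posDef_conj' (mpow_posDef (inner_posDef hX hY) _) (mpow_posDef hX _)

lemma mpow_half_mul {X : Mat} (hX : X.PosDef) : mpow X (1/2) * mpow X (-(1/2)) = 1 := by
  rw [mpow_add hX]; norm_num; exact mpow_zero hX

lemma mpow_neg_half_mul {X : Mat} (hX : X.PosDef) : mpow X (-(1/2)) * mpow X (1/2) = 1 := by
  rw [mpow_add hX]; norm_num; exact mpow_zero hX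

lemma inv_eq_mpow_half {X : Mat} (hX : X.PosDef) : X⁻¹ = mpow X (-(1/2)) * mpow X (-(1/2)) := by
  rw [mpow_add hX]; norm_num; exact (mpow_neg_one hX).symm

lemma mpow_half_sq {X : Mat} (hX : X.PosDef) : mpow X (1/2) * mpow X (1/2) = X := by
  rw [mpow_add hX]; norm_num; exact mpow_one hX

private lemma conj_cancel {p m W Y : Mat} (e1 : p * m = 1) (e2 : m * p = 1)
    (hWW : W * W = m * Y * m) :
    p * W * p * (m * m) * (p * W * p) = Y := by
  have c1 : ∀ Z : Mat, p * (m * Z) = Z := by intro Z; rw [← mul_assoc, e1, one_mul]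
  have c2 : ∀ Z : Mat, m * (p * Z) = Z := by intro Z; rw [← mul_assoc, e2, one_mul]
  have c3 : ∀ Z : Mat, W * (W * Z) = m * (Y * (m * Z)) := by
    intro Z; rw [← mul_assoc, hWW]; simp only [mul_assoc]
  calc p * W * p * (m * m) * (p * W * p)
      = p * (W * (p * (m * (m * (p * (W * p)))))) := by simp only [mul_assoc]
    _ = p * (W * (W * p)) := by rw [c1, c2]
    _ = p * (m * (Y * (m * p))) := by rw [c3]
    _ = Y * (m * p) := c1 _
    _ = Y := by rw [e2, mul_one]

private lemma conj_sandwich {p m Z : Mat} (e1 : p * m = 1) (e2 : m * p = 1) :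
    p * (m * Z * m) * p = Z := by
  calc p * (m * Z * m) * p = (p * m) * Z * (m * p) := by simp only [mul_assoc]
    _ = Z := by rw [e1, e2, one_mul, mul_one]

lemma gmean_mul {X Y : Mat} (hX : X.PosDef) (hY : Y.PosDef) :
    gmean X Y (1/2) * X⁻¹ * gmean X Y (1/2) = Y := by
  have hI := inner_posDef hX hY
  have hWW : mpow (mpow X (-(1/2)) * Y * mpow X (-(1/2))) (1/2) *
      mpow (mpow X (-(1/2)) * Y * mpow X (-(1/2))) (1/2)
      = mpow X (-(1/2)) * Y * mpow X (-(1/2)) := by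
    rw [mpow_add hI]; norm_num; exact mpow_one hI
  unfold gmean
  rw [inv_eq_mpow_half hX]
  exact conj_cancel (mpow_half_mul hX) (mpow_neg_half_mul hX) hWW

lemma gmean_unique {X Y : Mat} (hX : X.PosDef) (hY : Y.PosDef) {Z : Mat} (hZ : Z.PosDef)
    (h : Z * X⁻¹ * Z = Y) : gmean X Y (1/2) = Z := by
  have hI := inner_posDef hX hY
  have hV : (mpow X (-(1/2)) * Z * mpow X (-(1/2))).PosDef :=
    posDef_conj' hZ (mpow_posDef hX _)
  have hVV : (mpow X (-(1/2)) * Z * mpow X (-(1/2))) *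
      (mpow X (-(1/2)) * Z * mpow X (-(1/2)))
      = mpow X (-(1/2)) * Y * mpow X (-(1/2)) := by
    rw [inv_eq_mpow_half hX] at h
    calc (mpow X (-(1/2)) * Z * mpow X (-(1/2))) * (mpow X (-(1/2)) * Z * mpow X (-(1/2)))
        = mpow X (-(1/2)) * (Z * (mpow X (-(1/2)) * mpow X (-(1/2))) * Z) * mpow X (-(1/2)) := by
          simp only [mul_assoc]
      _ = mpow X (-(1/2)) * Y * mpow X (-(1/2)) := by rw [h]
  have hVW : mpow X (-(1/2)) * Z * mpow X (-(1/2))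
      = mpow (mpow X (-(1/2)) * Y * mpow X (-(1/2))) (1/2) := sqrt_unique hI hV hVV
  unfold gmean
  rw [← hVW]
  exact conj_sandwich (mpow_half_mul hX) (mpow_neg_half_mul hX)

end Gmean

lemma wmean_bracket {C : Mat} (hC : C.PosDef) (t : ℝ) :
    cfc (fun x : ℝ => 1 - t + t * x) C
      = ((1 - t : ℝ) : ℂ) • (1 : Mat) + ((t : ℝ) : ℂ) • C := by
  have h1 : cfc (fun x : ℝ => (1 - t) + t * x) C
      = algebraMap ℝ Mat (1 - t) + cfc (fun x : ℝ => t * x) C :=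
    cfc_const_add (1 - t) (fun x => t * x) C (contOn _ C) hC.isHermitian.isSelfAdjoint
  rw [h1, cfc_const_mul_id t C hC.isHermitian.isSelfAdjoint,
    Algebra.algebraMap_eq_smul_one, real_smul, real_smul]


lemma eq_one_of_conj_eq {S Z : Mat} (hS : S.PosDef) (hZ : Z.PosDef) (h : Z * S * Z = S) :
    Z = 1 := by
  have hpp : mpow S (1/2) * mpow S (1/2) = S := mpow_half_sq hS
  have hV : (mpow S (1/2) * Z * mpow S (1/2)).PosDef := posDef_conj' hZ (mpow_posDef hS _)
  have hSS : (S * S).PosDef := by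
    have := posDef_conj' (Matrix.PosDef.one) hS
    rwa [mul_one] at this
  have hVV : (mpow S (1/2) * Z * mpow S (1/2)) * (mpow S (1/2) * Z * mpow S (1/2)) = S * S := by
    calc (mpow S (1/2) * Z * mpow S (1/2)) * (mpow S (1/2) * Z * mpow S (1/2))
        = mpow S (1/2) * (Z * (mpow S (1/2) * mpow S (1/2)) * Z) * mpow S (1/2) := by
          simp only [mul_assoc]
      _ = mpow S (1/2) * (Z * S * Z) * mpow S (1/2) := by rw [hpp]
      _ = mpow S (1/2) * S * mpow S (1/2) := by rw [h]
      _ = mpow S (1/2) * (mpow S (1/2) * mpow S (1/2)) * mpow S (1/2) := by rw [hpp]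
      _ = (mpow S (1/2) * mpow S (1/2)) * (mpow S (1/2) * mpow S (1/2)) := by
          simp only [mul_assoc]
      _ = S * S := by rw [hpp]
  have h1 : mpow S (1/2) * Z * mpow S (1/2) = mpow (S * S) (1/2) := sqrt_unique hSS hV hVV
  have h2 : S = mpow (S * S) (1/2) := sqrt_unique hSS hS rfl
  have h3 : mpow S (1/2) * Z * mpow S (1/2) = mpow S (1/2) * mpow S (1/2) := by
    rw [h1, ← h2, hpp]
  have e1 := mpow_neg_half_mul hS
  have e2 := mpow_half_mul hS
  calc Z = (mpow S (-(1/2)) * mpow S (1/2)) * Z * (mpow S (1/2) * mpow S (-(1/2))) := by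
        rw [e1, e2, one_mul, mul_one]
    _ = mpow S (-(1/2)) * (mpow S (1/2) * Z * mpow S (1/2)) * mpow S (-(1/2)) := by
        simp only [mul_assoc]
    _ = mpow S (-(1/2)) * (mpow S (1/2) * mpow S (1/2)) * mpow S (-(1/2)) := by rw [h3]
    _ = (mpow S (-(1/2)) * mpow S (1/2)) * (mpow S (1/2) * mpow S (-(1/2))) := by
        simp only [mul_assoc]
    _ = 1 := by rw [e1, e2, one_mul]

lemma core {A B : Mat} (hA : A.PosDef) (hB : B.PosDef) {t : ℝ} (ht : 0 < t) (ht1 : t < 1) :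
    (smean A B t).PosDef ∧ (wmean A B t).PosDef ∧
    (cfc (fun x : ℝ => (1 - t + t * x) * x ^ (-t)) (gmean A⁻¹ B (1/2))).PosDef ∧
    cfc (fun x : ℝ => (1 - t + t * x) * x ^ (-t)) (gmean A⁻¹ B (1/2)) * smean A B t *
      cfc (fun x : ℝ => (1 - t + t * x) * x ^ (-t)) (gmean A⁻¹ B (1/2)) = wmean A B t ∧
    gmean (smean A B t)⁻¹ (wmean A B t) (1/2)
      = cfc (fun x : ℝ => (1 - t + t * x) * x ^ (-t)) (gmean A⁻¹ B (1/2)) := by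
  have hC : (gmean A⁻¹ B (1/2)).PosDef := gmean_posDef hA.inv hB
  have hq_pos : ∀ x ∈ spectrum ℝ (gmean A⁻¹ B (1/2)), 0 < 1 - t + t * x := by
    intro x hx
    have := spec_pos hC x hx
    nlinarith
  have hg_pos : ∀ x ∈ spectrum ℝ (gmean A⁻¹ B (1/2)), 0 < (1 - t + t * x) * x ^ (-t) :=
    fun x hx => mul_pos (hq_pos x hx) (Real.rpow_pos_of_pos (spec_pos hC x hx) _)
  have hZ : (cfc (fun x : ℝ => (1 - t + t * x) * x ^ (-t)) (gmean A⁻¹ B (1/2))).PosDef :=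
    cfc_posDef hC hg_pos
  have hQ : (cfc (fun x : ℝ => 1 - t + t * x) (gmean A⁻¹ B (1/2))).PosDef :=
    cfc_posDef hC hq_pos
  have hsm : smean A B t = mpow (gmean A⁻¹ B (1/2)) t * A * mpow (gmean A⁻¹ B (1/2)) t := rfl
  have hwm : wmean A B t
      = cfc (fun x : ℝ => 1 - t + t * x) (gmean A⁻¹ B (1/2)) * A *
        cfc (fun x : ℝ => 1 - t + t * x) (gmean A⁻¹ B (1/2)) := by
    rw [wmean_bracket hC t]
    rfl
  have hS : (smean A B t).PosDef := by
    rw [hsm]; exact posDef_conj' hA (mpow_posDef hC t)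
  have hW : (wmean A B t).PosDef := by
    rw [hwm]; exact posDef_conj' hA hQ
  have hsplit : cfc (fun x : ℝ => (1 - t + t * x) * x ^ (-t)) (gmean A⁻¹ B (1/2))
      = cfc (fun x : ℝ => 1 - t + t * x) (gmean A⁻¹ B (1/2)) *
        mpow (gmean A⁻¹ B (1/2)) (-t) :=
    cfc_mul _ _ _ (contOn _ _) (contOn _ _)
  have hsplit' : cfc (fun x : ℝ => (1 - t + t * x) * x ^ (-t)) (gmean A⁻¹ B (1/2))
      = mpow (gmean A⁻¹ B (1/2)) (-t) *
        cfc (fun x : ℝ => 1 - t + t * x) (gmean A⁻¹ B (1/2)) := by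
    rw [show (fun x : ℝ => (1 - t + t * x) * x ^ (-t))
        = (fun x : ℝ => x ^ (-t) * (1 - t + t * x)) from funext fun x => mul_comm _ _]
    exact cfc_mul _ _ _ (contOn _ _) (contOn _ _)
  have hcan1 : mpow (gmean A⁻¹ B (1/2)) (-t) * mpow (gmean A⁻¹ B (1/2)) t = 1 := by
    rw [mpow_add hC, neg_add_cancel, mpow_zero hC]
  have hcan2 : mpow (gmean A⁻¹ B (1/2)) t * mpow (gmean A⁻¹ B (1/2)) (-t) = 1 := by
    rw [mpow_add hC, add_neg_cancel, mpow_zero hC]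
  have hZPt : cfc (fun x : ℝ => (1 - t + t * x) * x ^ (-t)) (gmean A⁻¹ B (1/2)) *
      mpow (gmean A⁻¹ B (1/2)) t
      = cfc (fun x : ℝ => 1 - t + t * x) (gmean A⁻¹ B (1/2)) := by
    rw [hsplit, mul_assoc, hcan1, mul_one]
  have hPtZ : mpow (gmean A⁻¹ B (1/2)) t *
      cfc (fun x : ℝ => (1 - t + t * x) * x ^ (-t)) (gmean A⁻¹ B (1/2))
      = cfc (fun x : ℝ => 1 - t + t * x) (gmean A⁻¹ B (1/2)) := by
    rw [hsplit', ← mul_assoc, hcan2, one_mul]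
  have hZS : cfc (fun x : ℝ => (1 - t + t * x) * x ^ (-t)) (gmean A⁻¹ B (1/2)) * smean A B t *
      cfc (fun x : ℝ => (1 - t + t * x) * x ^ (-t)) (gmean A⁻¹ B (1/2)) = wmean A B t := by
    rw [hsm, hwm]
    calc cfc (fun x : ℝ => (1 - t + t * x) * x ^ (-t)) (gmean A⁻¹ B (1/2)) *
        (mpow (gmean A⁻¹ B (1/2)) t * A * mpow (gmean A⁻¹ B (1/2)) t) *
        cfc (fun x : ℝ => (1 - t + t * x) * x ^ (-t)) (gmean A⁻¹ B (1/2))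
        = (cfc (fun x : ℝ => (1 - t + t * x) * x ^ (-t)) (gmean A⁻¹ B (1/2)) *
            mpow (gmean A⁻¹ B (1/2)) t) * A *
          (mpow (gmean A⁻¹ B (1/2)) t *
            cfc (fun x : ℝ => (1 - t + t * x) * x ^ (-t)) (gmean A⁻¹ B (1/2))) := by
          simp only [mul_assoc]
      _ = _ := by rw [hZPt, hPtZ]
  refine ⟨hS, hW, hZ, hZS, ?_⟩
  apply gmean_unique hS.inv hW hZ
  rw [Matrix.nonsing_inv_nonsing_inv _ (isUnit_iff_ne_zero.mpr hS.det_pos.ne')]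
  exact hZS

end SmeanAux

/-- `A ♮ₜ B ⪯ A ◇ₜ B` for all `t ∈ (0,1)`, and equality holds iff `A = B`. -/
theorem smean_near_le_wmean {n : ℕ} (A B : Matrix (Fin n) (Fin n) ℂ)
    (hA : A.PosDef) (hB : B.PosDef) :
    (∀ t : ℝ, 0 < t → t < 1 → NearLE (smean A B t) (wmean A B t)) ∧
    (∀ t : ℝ, 0 < t → t < 1 → (smean A B t = wmean A B t ↔ A = B)) := by
  have hC : (gmean A⁻¹ B (1/2)).PosDef := SmeanAux.gmean_posDef hA.inv hB
  have hsa := hC.isHermitian.isSelfAdjoint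
  have hAinvinv : (A⁻¹)⁻¹ = A :=
    Matrix.nonsing_inv_nonsing_inv A (isUnit_iff_ne_zero.mpr hA.det_pos.ne')
  have hCAC : gmean A⁻¹ B (1/2) * A * gmean A⁻¹ B (1/2) = B := by
    have := SmeanAux.gmean_mul hA.inv hB
    rwa [hAinvinv] at this
  constructor
  · intro t ht ht1
    obtain ⟨hS, hW, hZ, hZS, hg⟩ := SmeanAux.core hA hB ht ht1
    show ((gmean (smean A B t)⁻¹ (wmean A B t) (1/2)) - 1).PosSemidef
    rw [hg]
    have h1 : cfc (fun x : ℝ => (1 - t + t * x) * x ^ (-t)) (gmean A⁻¹ B (1/2)) - 1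
        = cfc (fun x : ℝ => (1 - t + t * x) * x ^ (-t) - 1) (gmean A⁻¹ B (1/2)) := by
      rw [cfc_sub (fun x : ℝ => (1 - t + t * x) * x ^ (-t)) (fun _ : ℝ => (1:ℝ)) _
        (SmeanAux.contOn _ _) (SmeanAux.contOn _ _), cfc_const_one ℝ _ hsa]
    rw [h1]
    apply SmeanAux.cfc_posSemidef hC
    intro x hx
    have hx0 := SmeanAux.spec_pos hC x hx
    have hmul : x ^ t * x ^ (-t) = 1 := by
      rw [← Real.rpow_add hx0]; simp
    have hb := SmeanAux.bern_le hx0 ht ht1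
    have hxp : (0:ℝ) < x ^ (-t) := Real.rpow_pos_of_pos hx0 _
    nlinarith [mul_le_mul_of_nonneg_right hb hxp.le]
  · intro t ht ht1
    obtain ⟨hS, hW, hZ, hZS, hg⟩ := SmeanAux.core hA hB ht ht1
    constructor
    · intro h
      have hZ1 : cfc (fun x : ℝ => (1 - t + t * x) * x ^ (-t)) (gmean A⁻¹ B (1/2)) = 1 := by
        apply SmeanAux.eq_one_of_conj_eq hS hZ
        rw [hZS]; exact h.symm
      have heq : (spectrum ℝ (gmean A⁻¹ B (1/2))).EqOn
          (fun x : ℝ => (1 - t + t * x) * x ^ (-t)) (fun _ => 1) := by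
        apply eqOn_of_cfc_eq_cfc (a := gmean A⁻¹ B (1/2))
          (f := fun x : ℝ => (1 - t + t * x) * x ^ (-t)) (g := fun _ => 1)
          ?_ (SmeanAux.contOn _ _) (SmeanAux.contOn _ _) hsa
        rw [cfc_const_one ℝ _ hsa]
        exact hZ1
      have hone : ∀ x ∈ spectrum ℝ (gmean A⁻¹ B (1/2)), x = 1 := by
        intro x hx
        have hgx := heq hx
        simp only at hgx
        have hx0 := SmeanAux.spec_pos hC x hx
        by_contra hx1
        have hlt := SmeanAux.bern_lt hx0 hx1 ht ht1
        have hxp : (0:ℝ) < x ^ (-t) := Real.rpow_pos_of_pos hx0 _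
        have hmul : x ^ t * x ^ (-t) = 1 := by
          rw [← Real.rpow_add hx0]; simp
        nlinarith [mul_lt_mul_of_pos_right hlt hxp]
      have hCone : gmean A⁻¹ B (1/2) = 1 := by
        have hid : cfc (fun x : ℝ => x) (gmean A⁻¹ B (1/2))
            = cfc (fun _ : ℝ => (1:ℝ)) (gmean A⁻¹ B (1/2)) :=
          cfc_congr fun x hx => hone x hx
        rwa [cfc_id' ℝ _ hsa, cfc_const_one ℝ _ hsa] at hid
      rw [← hCAC, hCone, one_mul, mul_one]
    · intro h
      subst h
      have hCone : gmean A⁻¹ A (1/2) = 1 := by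
        apply SmeanAux.gmean_unique hA.inv hA Matrix.PosDef.one
        rw [one_mul, mul_one, hAinvinv]
      show mpow (gmean A⁻¹ A (1/2)) t * A * mpow (gmean A⁻¹ A (1/2)) t = wmean A A t
      rw [hCone, SmeanAux.mpow_one_matrix]
      unfold wmean
      rw [hCone]
      have honec : ((1 - t : ℝ) : ℂ) • (1 : Matrix (Fin n) (Fin n) ℂ)
          + ((t : ℝ) : ℂ) • (1 : Matrix (Fin n) (Fin n) ℂ) = 1 := by
        rw [← add_smul]
        have : ((1 - t : ℝ) : ℂ) + ((t : ℝ) : ℂ) = 1 := by push_cast; ring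
        rw [this, one_smul]
      rw [honec, one_mul, mul_one]
end
end

section
/- Let A, B be n×n complex positive definite matrices. The following are equivalent: (1) A ⪯ B; (2) A ◇_t B ⪯ A ◇_s B for some 0 ≤ t < s ≤ 1; (3) A ♮_t B ⪯ A ♮_s B for some real t < s. Moreover, if A ⪯ B, then for all 0 ≤ t < s one has A ◇_t B ⪯ A ◇_s B, and for all real t < s one has A ♮_t B ⪯ A ♮_s B. -/
open scoped ComplexOrder Matrix

noncomputable section

section AuxNearOrder

open Matrix

variable {n : ℕ} {A B C X Z : Matrix (Fin n) (Fin n) ℂ}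

private lemma finCtsOn {s : Set ℝ} (hs : s.Finite) (f : ℝ → ℝ) : ContinuousOn f s := by
  have := hs.to_subtype
  rw [continuousOn_iff_continuous_restrict]
  exact continuous_of_discreteTopology

private lemma specCtsOn (A : Matrix (Fin n) (Fin n) ℂ) (f : ℝ → ℝ) :
    ContinuousOn f (spectrum ℝ A) := finCtsOn A.finite_real_spectrum f

private lemma imgCtsOn (A : Matrix (Fin n) (Fin n) ℂ) (g f : ℝ → ℝ) :
    ContinuousOn f (g '' spectrum ℝ A) :=
  finCtsOn ((Matrix.finite_real_spectrum (A := A)).image g) f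

private lemma spec_pos (hA : A.PosDef) : ∀ x ∈ spectrum ℝ A, 0 < x := by
  intro x hx
  rw [hA.isHermitian.spectrum_real_eq_range_eigenvalues] at hx
  obtain ⟨i, rfl⟩ := hx
  exact hA.eigenvalues_pos i

private lemma posDef_conj' (hX : X.PosDef) {N : Matrix (Fin n) (Fin n) ℂ} (hN : IsUnit N) :
    (N * X * Nᴴ).PosDef := by
  refine PosDef.of_dotProduct_mulVec_pos (isHermitian_mul_mul_conjTranspose N hX.isHermitian) fun x hx => ?_
  have hNH : IsUnit (Nᴴ) := by rw [← Matrix.star_eq_conjTranspose]; exact hN.star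
  have hinj := mulVec_injective_iff_isUnit.mpr hNH
  have hxN : Nᴴ *ᵥ x ≠ 0 := fun h0 => hx (hinj (by simpa using h0))
  have key : star x ⬝ᵥ ((N * X * Nᴴ) *ᵥ x) = star (Nᴴ *ᵥ x) ⬝ᵥ (X *ᵥ (Nᴴ *ᵥ x)) := by
    rw [star_mulVec, conjTranspose_conjTranspose, ← mulVec_mulVec, ← mulVec_mulVec,
      dotProduct_mulVec]
  rw [key]
  exact hX.dotProduct_mulVec_pos hxN

private lemma unitary_isUnit {U : Matrix (Fin n) (Fin n) ℂ}
    (hU : U ∈ unitary (Matrix (Fin n) (Fin n) ℂ)) : IsUnit U :=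
  ⟨⟨U, star U, Unitary.mul_star_self_of_mem hU, Unitary.star_mul_self_of_mem hU⟩, rfl⟩

private lemma psd_unitary_conj_iff {U : Matrix (Fin n) (Fin n) ℂ}
    (hU : U ∈ unitary (Matrix (Fin n) (Fin n) ℂ)) (X : Matrix (Fin n) (Fin n) ℂ) :
    (U * X * star U).PosSemidef ↔ X.PosSemidef := by
  have h1 : star U * U = 1 := Unitary.star_mul_self_of_mem hU
  constructor
  · intro h
    have h2 := h.conjTranspose_mul_mul_same U
    have e : Uᴴ * (U * X * star U) * U = X := by
      rw [← Matrix.star_eq_conjTranspose]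
      simp only [mul_assoc]
      rw [h1, mul_one, ← mul_assoc, h1, one_mul]
    rwa [e] at h2
  · intro h
    have := h.mul_mul_conjTranspose_same U
    rwa [← Matrix.star_eq_conjTranspose] at this

private lemma loewner_one_cfc_iff (hA : A.PosDef) (f : ℝ → ℝ) :
    (cfc f A - 1).PosSemidef ↔ ∀ x ∈ spectrum ℝ A, 1 ≤ f x := by
  have hH := hA.isHermitian
  rw [hH.cfc_eq, Matrix.IsHermitian.cfc, Unitary.conjStarAlgAut_apply]
  set U := (hH.eigenvectorUnitary : Matrix (Fin n) (Fin n) ℂ) with hUdef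
  have hUm : U ∈ unitary (Matrix (Fin n) (Fin n) ℂ) := SetLike.coe_mem _
  have h1 : U * star U = 1 := Unitary.mul_star_self_of_mem hUm
  have key : U * diagonal (RCLike.ofReal ∘ f ∘ hH.eigenvalues) * star U - 1
      = U * (diagonal (RCLike.ofReal ∘ f ∘ hH.eigenvalues) - 1) * star U := by
    rw [mul_sub, mul_one, sub_mul, h1]
  have key2 : diagonal (RCLike.ofReal ∘ f ∘ hH.eigenvalues) - 1
      = diagonal (fun i => ((f (hH.eigenvalues i) - 1 : ℝ) : ℂ)) := by
    rw [← diagonal_one, diagonal_sub]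
    funext i
    simp
  rw [key, key2, psd_unitary_conj_iff hUm, posSemidef_diagonal_iff,
    hH.spectrum_real_eq_range_eigenvalues]
  constructor
  · rintro h - ⟨i, rfl⟩
    have := h i
    rw [Complex.zero_le_real] at this
    linarith
  · intro h i
    rw [Complex.zero_le_real]
    have := h _ ⟨i, rfl⟩
    linarith

private lemma posDef_cfc (hA : A.PosDef) (f : ℝ → ℝ) (hf : ∀ x ∈ spectrum ℝ A, 0 < f x) :
    (cfc f A).PosDef := by
  have hH := hA.isHermitian
  have hUm : (hH.eigenvectorUnitary : Matrix (Fin n) (Fin n) ℂ) ∈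
      unitary (Matrix (Fin n) (Fin n) ℂ) := SetLike.coe_mem _
  have hD : (diagonal (RCLike.ofReal ∘ f ∘ hH.eigenvalues) : Matrix (Fin n) (Fin n) ℂ).PosDef := by
    refine posDef_diagonal_iff.mpr fun i => ?_
    have := hf _ (hH.eigenvalues_mem_spectrum_real i)
    simpa only [Function.comp_apply, RCLike.ofReal_pos] using this
  have hfin := posDef_conj' hD (unitary_isUnit hUm)
  rw [hH.cfc_eq, Matrix.IsHermitian.cfc, Unitary.conjStarAlgAut_apply,
    Matrix.star_eq_conjTranspose]
  exact hfin

private lemma cfc_isHermitian' (f : ℝ → ℝ) (A : Matrix (Fin n) (Fin n) ℂ) :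
    (cfc f A).IsHermitian :=
  cfc_predicate f A

private lemma mpow_isHermitian (A : Matrix (Fin n) (Fin n) ℂ) (t : ℝ) :
    (mpow A t).IsHermitian :=
  cfc_isHermitian' _ A

private lemma mpow_posDef (hA : A.PosDef) (t : ℝ) : (mpow A t).PosDef :=
  posDef_cfc hA _ fun x hx => Real.rpow_pos_of_pos (spec_pos hA x hx) t

private lemma mpow_add (hA : A.PosDef) (s t : ℝ) : mpow A s * mpow A t = mpow A (s + t) := by
  rw [mpow, mpow, mpow, ← cfc_mul _ _ A (specCtsOn A _) (specCtsOn A _)]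
  exact cfc_congr fun x hx => (Real.rpow_add (spec_pos hA x hx) s t).symm

private lemma mpow_one' (hA : A.PosDef) : mpow A 1 = A := by
  rw [mpow]
  have : cfc (fun x : ℝ => x ^ (1:ℝ)) A = cfc (fun x : ℝ => x) A :=
    cfc_congr fun x _ => Real.rpow_one x
  rw [this, cfc_id' ℝ A hA.isHermitian.isSelfAdjoint]

private lemma mpow_zero' (hA : A.PosDef) : mpow A 0 = 1 := by
  rw [mpow]
  have : cfc (fun x : ℝ => x ^ (0:ℝ)) A = cfc (fun _ : ℝ => (1:ℝ)) A :=
    cfc_congr fun x _ => Real.rpow_zero x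
  rw [this, cfc_const 1 A hA.isHermitian.isSelfAdjoint]
  exact _root_.map_one (algebraMap ℝ (Matrix (Fin n) (Fin n) ℂ))

private lemma mpow_mpow (hA : A.PosDef) (s t : ℝ) : mpow (mpow A s) t = mpow A (s * t) := by
  rw [mpow, mpow, mpow,
    ← cfc_comp (fun x : ℝ => x ^ t) (fun x : ℝ => x ^ s) A hA.isHermitian.isSelfAdjoint
      (imgCtsOn A _ _) (specCtsOn A _)]
  exact cfc_congr fun x hx => by
    simp only [Function.comp_apply]
    rw [← Real.rpow_mul (spec_pos hA x hx).le]

private lemma mpow_neg_one (hA : A.PosDef) : A⁻¹ = mpow A (-1) := by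
  refine Matrix.inv_eq_right_inv ?_
  calc A * mpow A (-1) = mpow A 1 * mpow A (-1) := by rw [mpow_one' hA]
    _ = mpow A (1 + -1) := mpow_add hA 1 (-1)
    _ = 1 := by norm_num; exact mpow_zero' hA

private lemma mpow_inv' (hA : A.PosDef) (t : ℝ) : mpow A⁻¹ t = mpow A (-t) := by
  rw [mpow_neg_one hA, mpow_mpow hA]
  norm_num

private lemma sqrt_sq' (hZ : Z.PosDef) : mpow (Z * Z) (1/2 : ℝ) = Z := by
  have : Z * Z = mpow Z (1 + 1) := by rw [← mpow_add hZ, mpow_one' hZ]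
  rw [this, mpow_mpow hZ]
  norm_num [mpow_one' hZ]

private lemma gmean_posDef (hA : A.PosDef) (hB : B.PosDef) (t : ℝ) : (gmean A B t).PosDef := by
  have hP : (mpow A (1/2)).PosDef := mpow_posDef hA _
  have hPm : (mpow A (-(1/2))).PosDef := mpow_posDef hA _
  have hInner : (mpow A (-(1/2)) * B * mpow A (-(1/2))).PosDef := by
    have := posDef_conj' hB hPm.isUnit
    rwa [(mpow_isHermitian A (-(1/2))).eq] at this
  have hQ : (mpow (mpow A (-(1/2)) * B * mpow A (-(1/2))) t).PosDef := mpow_posDef hInner t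
  have := posDef_conj' hQ hP.isUnit
  rwa [(mpow_isHermitian A (1/2)).eq] at this

private lemma riccati (hX : X.PosDef) (hZ : Z.PosDef) : gmean X⁻¹ (Z * X * Z) (1/2) = Z := by
  have h1 : mpow X⁻¹ (1/2 : ℝ) = mpow X (-(1/2)) := mpow_inv' hX _
  have h2 : mpow X⁻¹ (-(1/2) : ℝ) = mpow X (1/2) := by rw [mpow_inv' hX]; norm_num
  have hsplit : X = mpow X (1/2) * mpow X (1/2) := by
    rw [mpow_add hX]; norm_num [mpow_one' hX]
  have hPinv : mpow X (-(1/2)) * mpow X (1/2) = 1 := by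
    rw [mpow_add hX]; norm_num [mpow_zero' hX]
  have hPinv' : mpow X (1/2) * mpow X (-(1/2)) = 1 := by
    rw [mpow_add hX]; norm_num [mpow_zero' hX]
  have hW : (mpow X (1/2) * Z * mpow X (1/2)).PosDef := by
    have := posDef_conj' hZ (mpow_posDef hX (1/2)).isUnit
    rwa [(mpow_isHermitian X (1/2)).eq] at this
  have hinner : mpow X (1/2) * (Z * X * Z) * mpow X (1/2)
      = (mpow X (1/2) * Z * mpow X (1/2)) * (mpow X (1/2) * Z * mpow X (1/2)) := by
    calc mpow X (1/2) * (Z * X * Z) * mpow X (1/2)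
        = mpow X (1/2) * (Z * (mpow X (1/2) * mpow X (1/2)) * Z) * mpow X (1/2) := by
          rw [← hsplit]
      _ = (mpow X (1/2) * Z * mpow X (1/2)) * (mpow X (1/2) * Z * mpow X (1/2)) := by
          simp only [mul_assoc]
  rw [gmean, h1, h2, hinner, sqrt_sq' hW]
  calc mpow X (-(1/2)) * (mpow X (1/2) * Z * mpow X (1/2)) * mpow X (-(1/2))
      = (mpow X (-(1/2)) * mpow X (1/2)) * Z * (mpow X (1/2) * mpow X (-(1/2))) := by
        simp only [mul_assoc]
    _ = Z := by rw [hPinv, hPinv', one_mul, mul_one]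

private lemma affine_cfc (hC : C.PosDef) (a b : ℝ) :
    ((a : ℂ)) • (1 : Matrix (Fin n) (Fin n) ℂ) + ((b : ℂ)) • C
      = cfc (fun x : ℝ => a + b * x) C := by
  have hsa : IsSelfAdjoint C := hC.isHermitian.isSelfAdjoint
  have h1 : cfc (fun x : ℝ => a + b * x) C
      = cfc (fun _ : ℝ => a) C + cfc (fun x : ℝ => b * x) C :=
    cfc_add C _ _ (specCtsOn C _) (specCtsOn C _)
  have h2 : cfc (fun x : ℝ => b * x) C = b • C := cfc_const_mul_id b C hsa
  have h3 : cfc (fun _ : ℝ => a) C = algebraMap ℝ _ a := cfc_const a C hsa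
  have h4 : ∀ (r : ℝ) (X : Matrix (Fin n) (Fin n) ℂ), r • X = ((r : ℂ)) • X := by
    intro r X
    ext i j
    simp [Matrix.smul_apply, Complex.real_smul]
  rw [h1, h2, h3, Algebra.algebraMap_eq_smul_one, h4, h4]

private lemma smean_step (hA : A.PosDef) (hC : C.PosDef) {t s : ℝ} (hts : t < s) :
    (LoewnerLE 1 (gmean (mpow C t * A * mpow C t)⁻¹ (mpow C s * A * mpow C s) (1/2))
      ↔ ∀ x ∈ spectrum ℝ C, 1 ≤ x) := by
  have hr : (0:ℝ) < s - t := sub_pos.mpr hts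
  have hZ : (mpow C (s - t)).PosDef := mpow_posDef hC _
  have hXt : (mpow C t * A * mpow C t).PosDef := by
    have := posDef_conj' hA (mpow_posDef hC t).isUnit
    rwa [(mpow_isHermitian C t).eq] at this
  have e1 : mpow C (s - t) * mpow C t = mpow C s := by
    rw [mpow_add hC]; congr 1; ring
  have e2 : mpow C t * mpow C (s - t) = mpow C s := by
    rw [mpow_add hC]; congr 1; ring
  have hfact : mpow C s * A * mpow C s
      = mpow C (s - t) * (mpow C t * A * mpow C t) * mpow C (s - t) := by
    calc mpow C s * A * mpow C s
        = (mpow C (s - t) * mpow C t) * A * (mpow C t * mpow C (s - t)) := by rw [e1, e2]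
      _ = mpow C (s - t) * (mpow C t * A * mpow C t) * mpow C (s - t) := by
          simp only [mul_assoc]
  rw [hfact, riccati hXt hZ]
  show (mpow C (s - t) - 1).PosSemidef ↔ _
  rw [show mpow C (s - t) = cfc (fun x : ℝ => x ^ (s - t)) C from rfl, loewner_one_cfc_iff hC]
  constructor
  · intro h x hx
    by_contra hlt
    push_neg at hlt
    exact absurd (h x hx) (not_le.mpr (Real.rpow_lt_one (spec_pos hC x hx).le hlt hr))
  · intro h x hx
    exact Real.one_le_rpow (h x hx) hr.le

private lemma wmean_step (hA : A.PosDef) (hC : C.PosDef) {t s : ℝ} (hts : t < s)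
    (hat : ∀ x ∈ spectrum ℝ C, 0 < (1 - t) + t * x)
    (has : ∀ x ∈ spectrum ℝ C, 0 < (1 - s) + s * x) :
    (LoewnerLE 1 (gmean
        ((((1 - t : ℝ) : ℂ) • (1 : Matrix (Fin n) (Fin n) ℂ) + ((t : ℝ) : ℂ) • C) * A *
          (((1 - t : ℝ) : ℂ) • (1 : Matrix (Fin n) (Fin n) ℂ) + ((t : ℝ) : ℂ) • C))⁻¹
        ((((1 - s : ℝ) : ℂ) • (1 : Matrix (Fin n) (Fin n) ℂ) + ((s : ℝ) : ℂ) • C) * A *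
          (((1 - s : ℝ) : ℂ) • (1 : Matrix (Fin n) (Fin n) ℂ) + ((s : ℝ) : ℂ) • C)) (1/2))
      ↔ ∀ x ∈ spectrum ℝ C, 1 ≤ x) := by
  rw [affine_cfc hC (1 - t) t, affine_cfc hC (1 - s) s]
  have hDt : (cfc (fun x : ℝ => (1 - t) + t * x) C).PosDef := posDef_cfc hC _ hat
  have hZ : (cfc (fun x : ℝ => ((1 - s) + s * x) / ((1 - t) + t * x)) C).PosDef :=
    posDef_cfc hC _ fun x hx => div_pos (has x hx) (hat x hx)
  have hXt : ((cfc (fun x : ℝ => (1 - t) + t * x) C) * A *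
      (cfc (fun x : ℝ => (1 - t) + t * x) C)).PosDef := by
    have := posDef_conj' hA hDt.isUnit
    rwa [(cfc_isHermitian' _ C).eq] at this
  have e1 : cfc (fun x : ℝ => ((1 - s) + s * x) / ((1 - t) + t * x)) C *
      cfc (fun x : ℝ => (1 - t) + t * x) C = cfc (fun x : ℝ => (1 - s) + s * x) C := by
    rw [← cfc_mul _ _ C (specCtsOn C _) (specCtsOn C _)]
    exact cfc_congr fun x hx => div_mul_cancel₀ _ (hat x hx).ne'
  have e2 : cfc (fun x : ℝ => (1 - t) + t * x) C *
      cfc (fun x : ℝ => ((1 - s) + s * x) / ((1 - t) + t * x)) C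
      = cfc (fun x : ℝ => (1 - s) + s * x) C := by
    rw [← cfc_mul _ _ C (specCtsOn C _) (specCtsOn C _)]
    exact cfc_congr fun x hx => by
      rw [mul_comm, div_mul_cancel₀ _ (hat x hx).ne']
  have hfact : cfc (fun x : ℝ => (1 - s) + s * x) C * A * cfc (fun x : ℝ => (1 - s) + s * x) C
      = cfc (fun x : ℝ => ((1 - s) + s * x) / ((1 - t) + t * x)) C *
        (cfc (fun x : ℝ => (1 - t) + t * x) C * A * cfc (fun x : ℝ => (1 - t) + t * x) C) *
        cfc (fun x : ℝ => ((1 - s) + s * x) / ((1 - t) + t * x)) C := by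
    calc cfc (fun x : ℝ => (1 - s) + s * x) C * A * cfc (fun x : ℝ => (1 - s) + s * x) C
        = (cfc (fun x : ℝ => ((1 - s) + s * x) / ((1 - t) + t * x)) C *
            cfc (fun x : ℝ => (1 - t) + t * x) C) * A *
          (cfc (fun x : ℝ => (1 - t) + t * x) C *
            cfc (fun x : ℝ => ((1 - s) + s * x) / ((1 - t) + t * x)) C) := by rw [e1, e2]
      _ = _ := by simp only [mul_assoc]
  rw [hfact, riccati hXt hZ]
  show (cfc (fun x : ℝ => ((1 - s) + s * x) / ((1 - t) + t * x)) C - 1).PosSemidef ↔ _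
  rw [loewner_one_cfc_iff hC]
  constructor
  · intro h x hx
    have h1 := (one_le_div (hat x hx)).mp (h x hx)
    nlinarith [sub_pos.mpr hts]
  · intro h x hx
    refine (one_le_div (hat x hx)).mpr ?_
    nlinarith [h x hx, sub_pos.mpr hts]

end AuxNearOrder

/-- equivalence of (1) `A ⪯ B`; (2) `A ◇ₜ B ⪯ A ◇ₛ B` for some
`0 ≤ t < s ≤ 1`; (3) `A ♮ₜ B ⪯ A ♮ₛ B` for some `t < s`; and, when `A ⪯ B`, monotonicity
of both curves in the near order. -/
theorem near_order_monotone_curves {n : ℕ} (A B : Matrix (Fin n) (Fin n) ℂ)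
    (hA : A.PosDef) (hB : B.PosDef) :
    (NearLE A B ↔ ∃ t s : ℝ, 0 ≤ t ∧ t < s ∧ s ≤ 1 ∧ NearLE (wmean A B t) (wmean A B s)) ∧
    (NearLE A B ↔ ∃ t s : ℝ, t < s ∧ NearLE (smean A B t) (smean A B s)) ∧
    (NearLE A B → ∀ t s : ℝ, 0 ≤ t → t < s → NearLE (wmean A B t) (wmean A B s)) ∧
    (NearLE A B → ∀ t s : ℝ, t < s → NearLE (smean A B t) (smean A B s)) := by
  have hC : (gmean A⁻¹ B (1/2)).PosDef := gmean_posDef hA.inv hB _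
  have hCpos := spec_pos hC
  have hNear : NearLE A B ↔ ∀ x ∈ spectrum ℝ (gmean A⁻¹ B (1/2)), 1 ≤ x := by
    show ((gmean A⁻¹ B (1/2)) - 1).PosSemidef ↔ _
    conv_lhs => rw [← cfc_id' ℝ (gmean A⁻¹ B (1/2)) hC.isHermitian.isSelfAdjoint]
    exact loewner_one_cfc_iff hC _
  have hsm : ∀ t s : ℝ, t < s → (NearLE (smean A B t) (smean A B s)
      ↔ ∀ x ∈ spectrum ℝ (gmean A⁻¹ B (1/2)), 1 ≤ x) :=
    fun t s hts => smean_step hA hC hts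
  have hwm : ∀ t s : ℝ, t < s →
      (∀ x ∈ spectrum ℝ (gmean A⁻¹ B (1/2)), 0 < (1 - t) + t * x) →
      (∀ x ∈ spectrum ℝ (gmean A⁻¹ B (1/2)), 0 < (1 - s) + s * x) →
      (NearLE (wmean A B t) (wmean A B s)
        ↔ ∀ x ∈ spectrum ℝ (gmean A⁻¹ B (1/2)), 1 ≤ x) :=
    fun t s hts h1 h2 => wmean_step hA hC hts h1 h2
  have wmono : NearLE A B → ∀ t s : ℝ, 0 ≤ t → t < s → NearLE (wmean A B t) (wmean A B s) := by
    intro h t s ht0 hts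
    have hx1 := hNear.mp h
    exact (hwm t s hts (fun x hx => by nlinarith [hx1 x hx])
      (fun x hx => by nlinarith [hx1 x hx])).mpr hx1
  have smono : NearLE A B → ∀ t s : ℝ, t < s → NearLE (smean A B t) (smean A B s) := by
    intro h t s hts
    exact (hsm t s hts).mpr (hNear.mp h)
  refine ⟨?_, ?_, wmono, smono⟩
  · constructor
    · intro h
      exact ⟨0, 1, le_refl 0, one_pos, le_refl 1, wmono h 0 1 (le_refl 0) one_pos⟩
    · rintro ⟨t, s, ht0, hts, hs1, h⟩
      refine hNear.mpr ((hwm t s hts ?_ ?_).mp h)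
      · intro x hx
        have := hCpos x hx
        have ht1 : t < 1 := lt_of_lt_of_le hts hs1
        nlinarith
      · intro x hx
        have := hCpos x hx
        have hs0 : 0 < s := lt_of_le_of_lt ht0 hts
        nlinarith
  · constructor
    · intro h
      exact ⟨0, 1, one_pos, smono h 0 1 one_pos⟩
    · rintro ⟨t, s, hts, h⟩
      exact hNear.mpr ((hsm t s hts).mp h)
end
end
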